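/- If {φ_i}_{i=1}^M is a sequence of unit norm vectors in ℂ^N that is linearly independent with Riesz bounds A and B (i.e., A·Σ|a_i|² ≤ ‖Σ a_iφ_i‖² ≤ B·Σ|a_i|² for all scalars), then the induced outer products {φ_iφ_i*}_{i=1}^M form a Riesz sequence in the space of N×N matrices with the Frobenius norm, with the same Riesz bounds A and B. -/

import Mathlib

open scoped BigOperators
open Matrix

/-- The induced outer product `φφ*` of a vector `φ ∈ ℂ^N`. -/
noncomputable def outerProd {N : ℕ} (φ : Fin N → ℂ) : Matrix (Fin N) (Fin N) ℂ :=
  Matrix.of fun i j => φ i * star (φ j)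

/-- The Frobenius inner product `⟨S,T⟩_F = Tr(T* S)`. -/
noncomputable def frob {N : ℕ} (S T : Matrix (Fin N) (Fin N) ℂ) : ℂ :=
  Matrix.trace (T.conjTranspose * S)

/-- The standard inner product on `ℂ^N`. -/
noncomputable def cip {N : ℕ} (φ ψ : Fin N → ℂ) : ℂ :=
  ∑ i, φ i * star (ψ i)

theorem stmt_4 {N M : ℕ} (φ : Fin M → Fin N → ℂ) (A B : ℝ)
    (hA : 0 < A)
    (hunit : ∀ i, cip (φ i) (φ i) = 1)
    (hriesz : ∀ a : Fin M → ℂ,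
      A * ∑ i, ‖a i‖ ^ 2 ≤ (cip (∑ i, a i • φ i) (∑ i, a i • φ i)).re ∧
      (cip (∑ i, a i • φ i) (∑ i, a i • φ i)).re ≤ B * ∑ i, ‖a i‖ ^ 2) :
    ∀ a : Fin M → ℂ,
      A * ∑ i, ‖a i‖ ^ 2 ≤
        (frob (∑ i, a i • outerProd (φ i)) (∑ i, a i • outerProd (φ i))).re ∧
      (frob (∑ i, a i • outerProd (φ i)) (∑ i, a i • outerProd (φ i))).re ≤
        B * ∑ i, ‖a i‖ ^ 2 := by
  intro a
  set S : Matrix (Fin N) (Fin N) ℂ := ∑ i, a i • outerProd (φ i) with hS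
  set b : Fin N → Fin M → ℂ := fun p i => a i * star (φ i p) with hb
  have hv : ∀ p, (fun q => S q p) = (∑ i, b p i • φ i : Fin N → ℂ) := by
    intro p; funext q
    simp [hS, hb, outerProd, Finset.sum_apply, Matrix.sum_apply]
    exact Finset.sum_congr rfl fun i _ => by ring
  have hfrob : frob S S = ∑ p, cip (∑ i, b p i • φ i) (∑ i, b p i • φ i) := by
    unfold frob cip Matrix.trace
    simp only [Matrix.diag_apply, Matrix.mul_apply, Matrix.conjTranspose_apply]
    refine Finset.sum_congr rfl fun p _ => ?_
    rw [← hv p]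
    exact Finset.sum_congr rfl fun q _ => mul_comm _ _
  have hre : (frob S S).re = ∑ p, (cip (∑ i, b p i • φ i) (∑ i, b p i • φ i)).re := by
    rw [hfrob, Complex.re_sum]
  have hsum : ∑ p, ∑ i, ‖b p i‖ ^ 2 = ∑ i, ‖a i‖ ^ 2 := by
    rw [Finset.sum_comm]
    refine Finset.sum_congr rfl fun i _ => ?_
    have h1 : ∑ p, ‖φ i p‖ ^ 2 = 1 := by
      have h2 := congrArg Complex.re (hunit i)
      simpa [cip, Complex.re_sum, Complex.mul_conj, Complex.sq_norm] using h2
    calc ∑ p, ‖b p i‖ ^ 2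
        = ∑ p, ‖a i‖ ^ 2 * ‖φ i p‖ ^ 2 := by
          refine Finset.sum_congr rfl fun p _ => ?_
          simp [hb, _root_.map_mul, mul_pow]
      _ = ‖a i‖ ^ 2 := by rw [← Finset.mul_sum, h1, mul_one]
  constructor
  · calc A * ∑ i, ‖a i‖ ^ 2
        = ∑ p, A * ∑ i, ‖b p i‖ ^ 2 := by
          rw [← Finset.mul_sum, hsum]
      _ ≤ ∑ p, (cip (∑ i, b p i • φ i) (∑ i, b p i • φ i)).re :=
          Finset.sum_le_sum fun p _ => (hriesz (b p)).1
      _ = (frob S S).re := hre.symm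
  · calc (frob S S).re
        = ∑ p, (cip (∑ i, b p i • φ i) (∑ i, b p i • φ i)).re := hre
      _ ≤ ∑ p, B * ∑ i, ‖b p i‖ ^ 2 :=
          Finset.sum_le_sum fun p _ => (hriesz (b p)).2
      _ = B * ∑ i, ‖a i‖ ^ 2 := by rw [← Finset.mul_sum, hsum]
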